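/- Facet condition for polyhedral continuous invariants (used in the proof of Proposition 2): Let A ∈ ℝ^{n×n}, b ∈ ℝ^{n×1}, c ∈ ℝ^{1×n}, a ∈ ℝ, Q ∈ ℝ^{r×n} with rows q_1, …, q_r and ρ ∈ ℝ^{r×1} with entries ρ_1, …, ρ_r. Suppose that for every i ∈ {1, …, r} and every x ∈ ℝⁿ, if Q x ≤ ρ, q_i x = ρ_i and c x < a, then q_i (A x + b) < 0. Then the polyhedron P = {x ∈ ℝⁿ : Q x ≤ ρ} is a continuous invariant of (D, f), where D = {x ∈ ℝⁿ : c x < a} and f(x) = A x + b. -/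

import Mathlib

open MvPolynomial Set Topology Filter

/-- Lie derivatives of a polynomial `p` along the polynomial vector field `f`. -/
noncomputable def lieDeriv {n : ℕ} (f : Fin n → MvPolynomial (Fin n) ℝ)
    (p : MvPolynomial (Fin n) ℝ) : ℕ → MvPolynomial (Fin n) ℝ
  | 0 => p
  | k + 1 => ∑ i, (pderiv i (lieDeriv f p k)) * f i

/-- Evaluation of a polynomial vector field at a point of ℝⁿ. -/
noncomputable def evalVF {n : ℕ} (f : Fin n → MvPolynomial (Fin n) ℝ)
    (x : Fin n → ℝ) : Fin n → ℝ := fun i => eval x (f i)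

/-- `x : ℝ → ℝⁿ` is a solution of `ẋ = F(x)` on `[0, ∞)`. -/
def IsSolutionOn {n : ℕ} (F : (Fin n → ℝ) → (Fin n → ℝ)) (x : ℝ → (Fin n → ℝ)) : Prop :=
  ∀ t ∈ Ici (0:ℝ), HasDerivWithinAt x (F (x t)) (Ici 0) t

/-- Solutions of `ẋ = F(x)` exist and are unique on `[0, ∞)` for every initial condition. -/
def CompleteFlow {n : ℕ} (F : (Fin n → ℝ) → (Fin n → ℝ)) : Prop :=
  (∀ x0 : Fin n → ℝ, ∃ x : ℝ → (Fin n → ℝ), x 0 = x0 ∧ IsSolutionOn F x) ∧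
  (∀ x y : ℝ → (Fin n → ℝ), IsSolutionOn F x → IsSolutionOn F y → x 0 = y 0 →
    ∀ t ∈ Ici (0:ℝ), x t = y t)

/-- `P` is a continuous invariant of `(D, F)`. -/
def IsCI {n : ℕ} (D P : Set (Fin n → ℝ)) (F : (Fin n → ℝ) → (Fin n → ℝ)) : Prop :=
  ∀ x : ℝ → (Fin n → ℝ), IsSolutionOn F x → x 0 ∈ P ∩ D →
    ∀ T ≥ (0:ℝ), (∀ t ∈ Icc (0:ℝ) T, x t ∈ D) → ∀ t ∈ Icc (0:ℝ) T, x t ∈ P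

/-- **Facet condition for polyhedral continuous invariants** (used in the proof
of Proposition 2): if on each facet of the polyhedron `{x | Q x ≤ ρ}` lying
inside the domain `{x | c x < a}` the vector field `A x + b` points strictly
inwards (`qᵢ (A x + b) < 0`), then the polyhedron is a continuous invariant of
`({x | c x < a}, A x + b)`. -/
theorem polyhedral_ci_facet_condition {n r : ℕ}
    (A : Matrix (Fin n) (Fin n) ℝ) (b : Fin n → ℝ)
    (c : Fin n → ℝ) (a : ℝ)
    (Q : Matrix (Fin r) (Fin n) ℝ) (ρ : Fin r → ℝ)
    (hfacet : ∀ (i : Fin r) (x : Fin n → ℝ),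
      (∀ j, Q.mulVec x j ≤ ρ j) → Q.mulVec x i = ρ i →
      dotProduct c x < a →
      Q.mulVec (A.mulVec x + b) i < 0) :
    IsCI {x | dotProduct c x < a} {x | ∀ i, Q.mulVec x i ≤ ρ i}
      (fun x => A.mulVec x + b) := by
  intro x hx hx0 T hT hD
  by_contra hcon
  push_neg at hcon
  obtain ⟨t₀, ht₀, hnot⟩ := hcon
  simp only [mem_setOf_eq, not_forall, not_le] at hnot
  set B : Set ℝ := {t | t ∈ Icc (0:ℝ) T ∧ ∃ i, ρ i < Q.mulVec (x t) i} with hBdef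
  have hBt₀ : t₀ ∈ B := ⟨ht₀, hnot⟩
  have hBne : B.Nonempty := ⟨t₀, hBt₀⟩
  have hBbd : BddBelow B := ⟨0, fun t ht => ht.1.1⟩
  set s := sInf B with hsdef
  have hs0 : 0 ≤ s := le_csInf hBne fun t ht => ht.1.1
  have hsT : s ≤ T := le_trans (csInf_le hBbd hBt₀) ht₀.2
  have hP_before : ∀ t, 0 ≤ t → t < s → ∀ i, Q.mulVec (x t) i ≤ ρ i := by
    intro t ht0 hts i
    by_contra hlt
    push_neg at hlt
    have htB : t ∈ B := ⟨⟨ht0, le_trans hts.le hsT⟩, ⟨i, hlt⟩⟩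
    exact absurd (csInf_le hBbd htB) (not_le.2 hts)
  have hcont : ∀ i, ContinuousWithinAt (fun t => Q.mulVec (x t) i) (Ici 0) s := by
    intro i
    have hxc : ContinuousWithinAt x (Ici 0) s := (hx s hs0).continuousWithinAt
    have hm : Continuous fun v : Fin n → ℝ => Q.mulVec v i := by
      simp only [Matrix.mulVec, dotProduct]
      exact continuous_finset_sum _ fun j _ => continuous_const.mul (continuous_apply j)
    exact (hm.continuousAt).comp_continuousWithinAt hxc
  have hxsP : ∀ i, Q.mulVec (x s) i ≤ ρ i := by
    intro i
    rcases eq_or_lt_of_le hs0 with h0 | h0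
    · rw [← h0]; exact hx0.1 i
    · have hne : (𝓝[Ioo 0 s] s).NeBot := by
        rw [← mem_closure_iff_nhdsWithin_neBot, closure_Ioo (ne_of_lt h0)]
        exact ⟨hs0, le_refl s⟩
      have htto : Filter.Tendsto (fun t => Q.mulVec (x t) i) (𝓝[Ioo 0 s] s)
          (𝓝 (Q.mulVec (x s) i)) :=
        (hcont i).tendsto.mono_left (nhdsWithin_mono _ fun t ht => ht.1.le)
      exact le_of_tendsto htto (Filter.eventually_of_mem self_mem_nhdsWithin
        fun t ht => hP_before t ht.1.le ht.2 i)
  have hxsD : dotProduct c (x s) < a := hD s ⟨hs0, hsT⟩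
  have hfreq : ∃ᶠ t in 𝓝[Set.Ioi s] s, ∃ i, ρ i < Q.mulVec (x t) i := by
    rw [(nhdsGT_basis s).frequently_iff]
    intro u hu
    obtain ⟨t, htB, htlt⟩ := (csInf_lt_iff hBbd hBne).mp (show sInf B < u from hu)
    have hst : s ≤ t := csInf_le hBbd htB
    have hne : s ≠ t := by
      rintro rfl
      obtain ⟨i, hi⟩ := htB.2
      exact absurd hi (not_lt.2 (hxsP i))
    exact ⟨t, ⟨lt_of_le_of_ne hst hne, htlt⟩, htB.2⟩
  have hpigeon : ∃ i, ∃ᶠ t in 𝓝[Set.Ioi s] s, ρ i < Q.mulVec (x t) i := by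
    by_contra h
    push_neg at h
    have hev : ∀ᶠ t in 𝓝[Set.Ioi s] s, ∀ i, Q.mulVec (x t) i ≤ ρ i :=
      Filter.eventually_all.mpr h
    obtain ⟨t, ⟨i, hi⟩, ht1⟩ := (hfreq.and_eventually hev).exists
    exact absurd hi (not_lt.2 (ht1 i))
  obtain ⟨i, hfi⟩ := hpigeon
  have hmono : 𝓝[Set.Ioi s] s ≤ 𝓝[Ici 0] s :=
    nhdsWithin_mono _ fun t ht => le_trans hs0 (le_of_lt ht)
  have hge : ρ i ≤ Q.mulVec (x s) i := by
    have hneBot : (𝓝[Set.Ioi s] s ⊓ Filter.principal {t | ρ i < Q.mulVec (x t) i}).NeBot :=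
      Filter.frequently_iff_neBot.mp hfi
    have htt : Filter.Tendsto (fun t => Q.mulVec (x t) i)
        (𝓝[Set.Ioi s] s ⊓ Filter.principal {t | ρ i < Q.mulVec (x t) i})
        (𝓝 (Q.mulVec (x s) i)) :=
      (hcont i).tendsto.mono_left (le_trans inf_le_left hmono)
    refine ge_of_tendsto htt ?_
    exact Filter.eventually_inf_principal.mpr (Filter.Eventually.of_forall fun t ht => ht.le)
  have heq : Q.mulVec (x s) i = ρ i := le_antisymm (hxsP i) hge
  have hderc : ∀ j, HasDerivWithinAt (fun t => x t j) ((A.mulVec (x s) + b) j) (Ici 0) s :=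
    hasDerivWithinAt_pi.mp (hx s hs0)
  have hder : HasDerivWithinAt (fun t => Q.mulVec (x t) i)
      (Q.mulVec (A.mulVec (x s) + b) i) (Ici 0) s := by
    simp only [Matrix.mulVec, dotProduct]
    exact HasDerivWithinAt.fun_sum fun j _ => (hderc j).const_mul (Q i j)
  have hdneg : Q.mulVec (A.mulVec (x s) + b) i < 0 := hfacet i (x s) hxsP heq hxsD
  have hslope : Filter.Tendsto (slope (fun t => Q.mulVec (x t) i) s)
      (𝓝[Ici 0 \ {s}] s) (𝓝 (Q.mulVec (A.mulVec (x s) + b) i)) :=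
    hasDerivWithinAt_iff_tendsto_slope.mp hder
  have hmono' : 𝓝[Set.Ioi s] s ≤ 𝓝[Ici 0 \ {s}] s :=
    nhdsWithin_mono _ fun t ht => ⟨le_trans hs0 (le_of_lt ht), ne_of_gt ht⟩
  have hev : ∀ᶠ t in 𝓝[Set.Ioi s] s, slope (fun t => Q.mulVec (x t) i) s t < 0 :=
    (hslope.mono_left hmono') (Iio_mem_nhds hdneg)
  have hev2 : ∀ᶠ t in 𝓝[Set.Ioi s] s, Q.mulVec (x t) i < ρ i := by
    filter_upwards [hev, self_mem_nhdsWithin] with t h1 h2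
    rw [slope_def_field] at h1
    have hts : (0:ℝ) < t - s := sub_pos.mpr h2
    have := (div_neg_iff).mp h1
    rcases this with ⟨_, h⟩ | ⟨h, _⟩
    · linarith
    · rw [heq] at h; linarith
  obtain ⟨t, h1, h2⟩ := (hfi.and_eventually hev2).exists
  linarith
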